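/- arXiv:math/0702835 — 2 statements merged into one kernel-verified Lean document; each statement's English description precedes it below -/
import Mathlib

section
/- Let H, H', H₀ be Hilbert spaces, A : H → H' and T' : H' → H' contractions, and R, Q : H₀ → H bounded operators satisfying T'AR = AQ and R*R ≤ Q*Q. Then for every h ∈ H₀ one has ‖D_A Q h‖² ≥ ‖D_{T'} A R h‖² + ‖D_A R h‖², where D_A = (I − A*A)^{1/2} and D_{T'} = (I − T'*T')^{1/2} are the defect operators. -/
open ContinuousLinearMap

/-- The defect operator `D_A = (I - A*A)^{1/2}` of an operator between Hilbert spaces. -/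
noncomputable def defect {H H' : Type*} [NormedAddCommGroup H] [InnerProductSpace ℂ H]
    [CompleteSpace H] [NormedAddCommGroup H'] [InnerProductSpace ℂ H'] [CompleteSpace H']
    (A : H →L[ℂ] H') : H →L[ℂ] H := CFC.sqrt (1 - adjoint A ∘L A)

lemma defect_nonneg_arg {H H' : Type*} [NormedAddCommGroup H] [InnerProductSpace ℂ H]
    [CompleteSpace H] [NormedAddCommGroup H'] [InnerProductSpace ℂ H'] [CompleteSpace H']
    (A : H →L[ℂ] H') (hA : ‖A‖ ≤ 1) : (0 : H →L[ℂ] H) ≤ 1 - adjoint A ∘L A := by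
  rw [ContinuousLinearMap.nonneg_iff_isPositive]
  constructor
  · have h1 : IsSelfAdjoint (adjoint A ∘L A) := by
      rw [ContinuousLinearMap.isSelfAdjoint_iff', adjoint_comp, adjoint_adjoint]
    exact ((IsSelfAdjoint.one _).sub h1).isSymmetric
  · intro x
    have h1 : ‖A x‖ ≤ ‖x‖ := by
      calc ‖A x‖ ≤ ‖A‖ * ‖x‖ := A.le_opNorm x
        _ ≤ 1 * ‖x‖ := by gcongr
        _ = ‖x‖ := one_mul _
    have : reApplyInnerSelf (1 - adjoint A ∘L A) x = ‖x‖ ^ 2 - ‖A x‖ ^ 2 := by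
      simp only [reApplyInnerSelf, sub_apply, one_apply, comp_apply, inner_sub_left, map_sub,
        adjoint_inner_left]
      rw [← @inner_self_eq_norm_sq ℂ, ← @inner_self_eq_norm_sq ℂ]
      rfl
    rw [this]
    nlinarith [norm_nonneg (A x), norm_nonneg x]

lemma norm_defect_sq {H H' : Type*} [NormedAddCommGroup H] [InnerProductSpace ℂ H]
    [CompleteSpace H] [NormedAddCommGroup H'] [InnerProductSpace ℂ H'] [CompleteSpace H']
    (A : H →L[ℂ] H') (hA : ‖A‖ ≤ 1) (x : H) :
    ‖defect A x‖ ^ 2 = ‖x‖ ^ 2 - ‖A x‖ ^ 2 := by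
  have h0 := defect_nonneg_arg A hA
  have hsq : defect A ∘L defect A = 1 - adjoint A ∘L A := by
    have := CFC.sq_sqrt (1 - adjoint A ∘L A) h0
    rw [sq] at this
    simpa [defect, ContinuousLinearMap.mul_def] using this
  have hsa : IsSelfAdjoint (defect A) := (CFC.sqrt_nonneg (a := 1 - adjoint A ∘L A)).isSelfAdjoint
  have hadj : adjoint (defect A) = defect A := ContinuousLinearMap.isSelfAdjoint_iff'.mp hsa
  have key := adjoint_inner_left (defect A) x (defect A x)
  rw [hadj] at key
  have : (‖defect A x‖ ^ 2 : ℝ) = RCLike.re (inner ℂ (defect A (defect A x)) x : ℂ) := by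
    rw [key]
    exact (inner_self_eq_norm_sq (𝕜 := ℂ) _).symm
  rw [this, ← ContinuousLinearMap.comp_apply, hsq]
  simp only [sub_apply, one_apply, comp_apply, inner_sub_left, map_sub, adjoint_inner_left]
  rw [← @inner_self_eq_norm_sq ℂ, ← @inner_self_eq_norm_sq ℂ]
  rfl

theorem stmt_0 {H H' H₀ : Type*}
    [NormedAddCommGroup H] [InnerProductSpace ℂ H] [CompleteSpace H]
    [NormedAddCommGroup H'] [InnerProductSpace ℂ H'] [CompleteSpace H']
    [NormedAddCommGroup H₀] [InnerProductSpace ℂ H₀] [CompleteSpace H₀]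
    (A : H →L[ℂ] H') (T' : H' →L[ℂ] H') (hA : ‖A‖ ≤ 1) (hT' : ‖T'‖ ≤ 1)
    (R Q : H₀ →L[ℂ] H)
    (hcomm : T' ∘L A ∘L R = A ∘L Q)
    (hRQ : adjoint R ∘L R ≤ adjoint Q ∘L Q) :
    ∀ h : H₀,
      ‖defect T' (A (R h))‖ ^ 2 + ‖defect A (R h)‖ ^ 2 ≤ ‖defect A (Q h)‖ ^ 2 := by
  intro h
  have hTAR : T' (A (R h)) = A (Q h) := by
    have := congrArg (fun f => f h) hcomm
    simpa using this
  have hnorm : ‖R h‖ ^ 2 ≤ ‖Q h‖ ^ 2 := by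
    have hpos := (ContinuousLinearMap.le_def _ _).mp hRQ
    have := hpos.inner_nonneg_left h
    simp only [reApplyInnerSelf, sub_apply, comp_apply, inner_sub_left, map_sub,
      adjoint_inner_left] at this
    rw [Complex.le_def] at this
    simp only [Complex.zero_re, Complex.sub_re] at this
    rw [← @inner_self_eq_norm_sq ℂ, ← @inner_self_eq_norm_sq ℂ, RCLike.re_to_complex, RCLike.re_to_complex]
    linarith [this.1]
  rw [norm_defect_sq A hA, norm_defect_sq A hA, norm_defect_sq T' hT', hTAR]
  linarith
end

section
/- Let T be a contraction on a Hilbert space H. Define the operator U' on H ⊕ ℓ²(ℕ, D̄_T) by U'(h, (f₀, f₁, f₂, …)) = (T h, (D_T h, f₀, f₁, …)), where D_T = (I − T*T)^{1/2} and D̄_T is the closure of its range. Then U' is an isometry, and the compression of U' to H equals T (i.e., P_H U'|_H = T, where P_H is the orthogonal projection onto the summand H). -/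
open ContinuousLinearMap RCLike
open scoped ComplexInnerProductSpace ENNReal

/-- The defect space `D̄_Γ`: the closure of the range of the defect operator. -/
noncomputable def defectSpace {H H' : Type*} [NormedAddCommGroup H] [InnerProductSpace ℂ H]
    [CompleteSpace H] [NormedAddCommGroup H'] [InnerProductSpace ℂ H'] [CompleteSpace H']
    (A : H →L[ℂ] H') : Submodule ℂ H := (LinearMap.range (defect A : H →ₗ[ℂ] H)).topologicalClosure

lemma defect_nonneg {H : Type*} [NormedAddCommGroup H] [InnerProductSpace ℂ H] [CompleteSpace H]
    (T : H →L[ℂ] H) (hT : ‖T‖ ≤ 1) : (0 : H →L[ℂ] H) ≤ 1 - adjoint T ∘L T := by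
  rw [ContinuousLinearMap.nonneg_iff_isPositive]
  constructor
  · have h1 : IsSelfAdjoint (adjoint T ∘L T) := by
      rw [← ContinuousLinearMap.star_eq_adjoint, ← ContinuousLinearMap.mul_def]
      exact IsSelfAdjoint.star_mul_self T
    simpa using ContinuousLinearMap.isSelfAdjoint_iff_isSymmetric.mp ((IsSelfAdjoint.one (R := H →L[ℂ] H)).sub h1)
  · intro x
    have h1 : re ⟪(1 - adjoint T ∘L T) x, x⟫ = ‖x‖^2 - ‖T x‖^2 := by
      simp only [ContinuousLinearMap.sub_apply, inner_sub_left, ContinuousLinearMap.comp_apply,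
        adjoint_inner_left, ContinuousLinearMap.one_apply, map_sub, inner_self_eq_norm_sq,
        inner_self_eq_norm_sq (𝕜 := ℂ)]
    have h2 : ‖T x‖ ≤ ‖x‖ := by
      calc ‖T x‖ ≤ ‖T‖ * ‖x‖ := T.le_opNorm x
        _ ≤ 1 * ‖x‖ := by gcongr
        _ = ‖x‖ := one_mul _
    rw [ContinuousLinearMap.reApplyInnerSelf, h1]
    nlinarith [norm_nonneg (T x), norm_nonneg x]

lemma norm_sq_defect {H : Type*} [NormedAddCommGroup H] [InnerProductSpace ℂ H] [CompleteSpace H]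
    (T : H →L[ℂ] H) (hT : ‖T‖ ≤ 1) (h : H) :
    ‖T h‖^2 + ‖defect T h‖^2 = ‖h‖^2 := by
  have hpos := defect_nonneg T hT
  have hsq : defect T ∘L defect T = 1 - adjoint T ∘L T := by
    have := CFC.sqrt_mul_sqrt_self (1 - adjoint T ∘L T) hpos
    simpa [defect, ContinuousLinearMap.mul_def] using this
  have hsa : IsSelfAdjoint (defect T) := (CFC.sqrt_nonneg (a := 1 - adjoint T ∘L T)).isSelfAdjoint
  have key : (‖defect T h‖^2 : ℝ) = re ⟪(defect T ∘L defect T) h, h⟫ := by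
    rw [ContinuousLinearMap.comp_apply]
    nth_rewrite 2 [← hsa.adjoint_eq]
    rw [adjoint_inner_left]
    simp only [inner_self_eq_norm_sq (𝕜 := ℂ)]
  rw [key, hsq]
  have : re ⟪(1 - adjoint T ∘L T) h, h⟫ = ‖h‖^2 - ‖T h‖^2 := by
    simp only [ContinuousLinearMap.sub_apply, inner_sub_left, ContinuousLinearMap.comp_apply,
      adjoint_inner_left, ContinuousLinearMap.one_apply, map_sub, inner_self_eq_norm_sq,
      inner_self_eq_norm_sq (𝕜 := ℂ)]
  rw [this]; ring

lemma lp_shift_norm {E : Type*} [NormedAddCommGroup E]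
    (f g : lp (fun _ : ℕ => E) 2) (a : E) (h0 : g 0 = a) (hs : ∀ n, g (n + 1) = f n) :
    ‖g‖ ^ 2 = ‖a‖ ^ 2 + ‖f‖ ^ 2 := by
  have hp : 0 < (2 : ℝ≥0∞).toReal := by norm_num
  have hg := lp.norm_rpow_eq_tsum hp g
  have hf := lp.norm_rpow_eq_tsum hp f
  have hsum : Summable fun n => ‖g n‖ ^ (2 : ℝ≥0∞).toReal := (lp.memℓp g).summable hp
  have hshift := Summable.tsum_eq_zero_add hsum
  have h2 : (2 : ℝ≥0∞).toReal = (2 : ℝ) := by norm_num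
  have hrp : ∀ r : ℝ, r ^ (2 : ℝ≥0∞).toReal = r ^ (2 : ℕ) := by
    intro r; rw [h2]; norm_num [Real.rpow_natCast r 2]
  calc ‖g‖ ^ 2 = ‖g‖ ^ (2 : ℝ≥0∞).toReal := (hrp _).symm
    _ = ∑' n, ‖g n‖ ^ (2 : ℝ≥0∞).toReal := hg
    _ = ‖g 0‖ ^ (2 : ℝ≥0∞).toReal + ∑' n, ‖g (n + 1)‖ ^ (2 : ℝ≥0∞).toReal := hshift
    _ = ‖a‖ ^ 2 + ‖f‖ ^ 2 := by
        rw [h0]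
        simp_rw [hs, ← hf, hrp]

theorem stmt_10 {H : Type*}
    [NormedAddCommGroup H] [InnerProductSpace ℂ H] [CompleteSpace H]
    (T : H →L[ℂ] H) (hT : ‖T‖ ≤ 1)
    (hmem : ∀ h : H, defect T h ∈ defectSpace T)
    (U' : WithLp 2 (H × lp (fun _ : ℕ => (defectSpace T)) 2) →L[ℂ]
          WithLp 2 (H × lp (fun _ : ℕ => (defectSpace T)) 2))
    (hU' : ∀ x : WithLp 2 (H × lp (fun _ : ℕ => (defectSpace T)) 2),
      ((WithLp.equiv 2 _) (U' x)).1 = T ((WithLp.equiv 2 _) x).1 ∧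
      ((WithLp.equiv 2 _) (U' x)).2 0 = ⟨defect T ((WithLp.equiv 2 _) x).1,
        hmem ((WithLp.equiv 2 _) x).1⟩ ∧
      ∀ n : ℕ, ((WithLp.equiv 2 _) (U' x)).2 (n + 1) = ((WithLp.equiv 2 _) x).2 n) :
    (∀ x, ‖U' x‖ = ‖x‖) ∧
    ∀ h : H, ((WithLp.equiv 2 _) (U' ((WithLp.equiv 2 _).symm (h, 0)))).1 = T h := by
  constructor
  · intro x
    obtain ⟨h1, h2, h3⟩ := hU' x
    simp at h1 h2 h3
    have key : ‖U' x‖ ^ 2 = ‖x‖ ^ 2 := by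
      rw [WithLp.prod_norm_sq_eq_of_L2, WithLp.prod_norm_sq_eq_of_L2]
      have hshift : ‖(U' x).snd‖ ^ 2 =
          ‖(⟨defect T x.fst, hmem x.fst⟩ : defectSpace T)‖ ^ 2 + ‖x.snd‖ ^ 2 :=
        lp_shift_norm x.snd (U' x).snd _ h2 h3
      have hco : ‖(⟨defect T x.fst, hmem x.fst⟩ : defectSpace T)‖ = ‖defect T x.fst‖ := rfl
      rw [hshift, hco, h1, ← add_assoc, norm_sq_defect T hT x.fst]
    exact pow_left_inj₀ (norm_nonneg _) (norm_nonneg _) (two_ne_zero) |>.mp key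
  · intro h
    have := (hU' ((WithLp.equiv 2 _).symm (h, 0))).1
    simpa using this
end
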